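/- Suppose 0 < C < K and F(1) < (1 − C/K) * exp(λ). Then there exists exactly one p ∈ [0,1] with F(p) = G(p), and this p lies in the open interval (0,1). (This p is the unique symmetric mixed Nash equilibrium of the protection game.) -/

import Mathlib

open Finset
lemma key_ineq (T : ℕ) (lam : ℝ) (hlam : 0 < lam) (r : Fin T → ℝ) (hr : ∀ t, 0 < r t)
    (hrsum : ∑ t, r t = 1) (a : Fin T → ℝ) (ha : ∀ t, 0 < a t) (t0 : Fin T)
    (SF : Finset (Fin T → ℕ)) (hmem : ∀ x, x ∈ SF ↔ ∑ t, (x t : ℝ) * a t < 1)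
    (p : ℝ) (hp : 0 < p) :
    ∑ x ∈ SF, (∏ t, (lam * r t) ^ (x t) / (Nat.factorial (x t) : ℝ)) *
      ((∑ t, x t : ℕ) * p ^ ((∑ t, x t) - 1)) <
    lam * ∑ x ∈ SF, (∏ t, (lam * r t) ^ (x t) / (Nat.factorial (x t) : ℝ)) * p ^ (∑ t, x t) := by
  classical
  set c : (Fin T → ℕ) → ℝ := fun x => ∏ t, (lam * r t) ^ (x t) / (Nat.factorial (x t) : ℝ)
    with hc
  set n : (Fin T → ℕ) → ℕ := fun x => ∑ t, x t with hn
  have hcpos : ∀ x, 0 < c x := by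
    intro x
    refine Finset.prod_pos fun t _ => div_pos (pow_pos (mul_pos hlam (hr t)) _) (by positivity)
  -- downward closure
  have hdown : ∀ x ∈ SF, ∀ t, Function.update x t (x t - 1) ∈ SF := by
    intro x hx t
    rw [hmem] at hx ⊢
    refine lt_of_le_of_lt ?_ hx
    refine Finset.sum_le_sum fun s _ => ?_
    by_cases hst : s = t
    · subst hst
      simp only [Function.update_self]
      have : ((x s - 1 : ℕ) : ℝ) ≤ (x s : ℝ) := by exact_mod_cast Nat.sub_le _ _
      exact mul_le_mul_of_nonneg_right this (ha s).le
    · simp [Function.update_of_ne hst]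
  -- the term identity: for x t ≥ 1,
  have hcd : ∀ (x : Fin T → ℕ) (t : Fin T), 1 ≤ x t →
      c x * (x t : ℝ) = lam * r t * c (Function.update x t (x t - 1)) := by
    intro x t hxt
    have h1 : c x = ((lam * r t) ^ (x t) / (Nat.factorial (x t) : ℝ)) *
        ∏ s ∈ Finset.univ.erase t, (lam * r s) ^ (x s) / (Nat.factorial (x s) : ℝ) :=
      (Finset.mul_prod_erase _ _ (Finset.mem_univ t)).symm
    have h2 : c (Function.update x t (x t - 1)) =
        ((lam * r t) ^ (x t - 1) / (Nat.factorial (x t - 1) : ℝ)) *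
        ∏ s ∈ Finset.univ.erase t, (lam * r s) ^ (x s) / (Nat.factorial (x s) : ℝ) := by
      have := (Finset.mul_prod_erase Finset.univ
        (fun s => (lam * r s) ^ (Function.update x t (x t - 1) s) /
          (Nat.factorial (Function.update x t (x t - 1) s) : ℝ)) (Finset.mem_univ t)).symm
      simp only [hc]
      rw [this, Function.update_self]
      congr 1
      refine Finset.prod_congr rfl fun s hs => ?_
      rw [Function.update_of_ne (Finset.ne_of_mem_erase hs)]
    have key : ((lam * r t) ^ (x t) / (Nat.factorial (x t) : ℝ)) * (x t : ℝ) =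
        (lam * r t) * ((lam * r t) ^ (x t - 1) / (Nat.factorial (x t - 1) : ℝ)) := by
      obtain ⟨k, hk⟩ : ∃ k, x t = k + 1 := ⟨x t - 1, (Nat.succ_pred_eq_of_pos hxt).symm⟩
      rw [hk]
      simp only [Nat.add_sub_cancel, pow_succ, Nat.factorial_succ]
      have : (Nat.factorial k : ℝ) ≠ 0 := by positivity
      push_cast
      field_simp
    rw [h1, h2, mul_right_comm, key]
    ring
  have hnd : ∀ (x : Fin T → ℕ) (t : Fin T), 1 ≤ x t →
      n (Function.update x t (x t - 1)) = n x - 1 := by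
    intro x t hxt
    rw [hn]
    simp only
    rw [← Finset.sum_erase_add _ _ (Finset.mem_univ t),
        ← Finset.sum_erase_add _ x (Finset.mem_univ t)]
    rw [Function.update_self]
    have : ∑ s ∈ Finset.univ.erase t, Function.update x t (x t - 1) s
        = ∑ s ∈ Finset.univ.erase t, x s :=
      Finset.sum_congr rfl fun s hs => by rw [Function.update_of_ne (Finset.ne_of_mem_erase hs)]
    rw [this]
    omega
  -- witness outside B
  obtain ⟨N, hN⟩ : ∃ N : ℕ, (1 : ℝ) ≤ N * a t0 := by
    obtain ⟨N, hN⟩ := exists_nat_ge (1 / a t0)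
    exact ⟨N, by rw [div_le_iff₀ (ha t0)] at hN; linarith⟩
  have hex : ∃ n : ℕ, (1 : ℝ) ≤ n * a t0 := ⟨N, hN⟩
  set Nf := Nat.find hex with hNfdef
  have hNf : (1 : ℝ) ≤ Nf * a t0 := Nat.find_spec hex
  have hNfpos : 1 ≤ Nf := by
    rcases Nat.eq_zero_or_pos Nf with h | h
    · exfalso; rw [h] at hNf; norm_num at hNf
    · exact h
  set m : ℕ := Nf - 1 with hm
  have hmlt : (m : ℝ) * a t0 < 1 := by
    have := Nat.find_min hex (m := m) (by omega)
    push_neg at this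
    exact this
  have hm1 : (1 : ℝ) ≤ (m + 1 : ℕ) * a t0 := by
    have : m + 1 = Nf := by omega
    rw [this]; exact hNf
  set y₀ : Fin T → ℕ := fun s => if s = t0 then m else 0 with hy₀
  have hsum_y₀ : ∀ (v : ℕ), ∑ s, ((Function.update y₀ t0 v s : ℕ) : ℝ) * a s = v * a t0 := by
    intro v
    have : ∀ s, ((Function.update y₀ t0 v s : ℕ) : ℝ) * a s =
        if s = t0 then (v : ℝ) * a s else 0 := by
      intro s
      by_cases hs : s = t0
      · subst hs; simp [Function.update_self]
      · simp [Function.update_of_ne hs, hy₀, hs]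
    rw [Finset.sum_congr rfl fun s _ => this s, Finset.sum_ite_eq']
    simp
  have hy₀SF : y₀ ∈ SF := by
    rw [hmem]
    have : ∑ s, ((y₀ s : ℕ) : ℝ) * a s = (m : ℝ) * a t0 := by
      have h := hsum_y₀ m
      rwa [show Function.update y₀ t0 m = y₀ by
        funext s; by_cases hs : s = t0 <;> simp [Function.update, hy₀, hs]] at h
    rw [this]; exact hmlt
  have hy₀out : Function.update y₀ t0 (y₀ t0 + 1) ∉ SF := by
    rw [hmem]
    push_neg
    have hyt : y₀ t0 = m := by simp [hy₀]
    rw [hyt, hsum_y₀ (m + 1)]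
    exact_mod_cast hm1
  -- the sets of pairs
  set A : Finset ((Fin T → ℕ) × Fin T) :=
    (SF ×ˢ Finset.univ).filter (fun q => 1 ≤ q.1 q.2) with hA
  set B : Finset ((Fin T → ℕ) × Fin T) :=
    (SF ×ˢ Finset.univ).filter (fun q => Function.update q.1 q.2 (q.1 q.2 + 1) ∈ SF) with hB
  have step1 : ∑ x ∈ SF, c x * ((n x : ℝ) * p ^ (n x - 1)) =
      ∑ q ∈ SF ×ˢ Finset.univ, c q.1 * (q.1 q.2 : ℝ) * p ^ (n q.1 - 1) := by
    rw [Finset.sum_product]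
    refine Finset.sum_congr rfl fun x _ => ?_
    have hcast : ((n x : ℕ) : ℝ) = ∑ t, ((x t : ℕ) : ℝ) := by
      rw [hn]; push_cast; rfl
    rw [hcast, Finset.sum_mul, Finset.mul_sum]
    exact Finset.sum_congr rfl fun t _ => by ring
  have step2 : ∑ q ∈ SF ×ˢ Finset.univ, c q.1 * (q.1 q.2 : ℝ) * p ^ (n q.1 - 1) =
      ∑ q ∈ A, c q.1 * (q.1 q.2 : ℝ) * p ^ (n q.1 - 1) := by
    refine (Finset.sum_filter_of_ne fun q _ hne => ?_).symm
    by_contra h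
    push_neg at h
    interval_cases h' : q.1 q.2
    all_goals simp_all
  have step3 : ∑ q ∈ A, c q.1 * (q.1 q.2 : ℝ) * p ^ (n q.1 - 1) =
      ∑ q ∈ B, lam * r q.2 * (c q.1 * p ^ (n q.1)) := by
    refine Finset.sum_nbij'
      (fun q => (Function.update q.1 q.2 (q.1 q.2 - 1), q.2))
      (fun q => (Function.update q.1 q.2 (q.1 q.2 + 1), q.2))
      ?_ ?_ ?_ ?_ ?_
    · rintro ⟨x, t⟩ hq
      rw [hA, Finset.mem_filter, Finset.mem_product] at hq
      obtain ⟨⟨hxSF, -⟩, hxt⟩ := hq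
      rw [hB, Finset.mem_filter, Finset.mem_product]
      have hupd : Function.update (Function.update x t (x t - 1)) t
          (Function.update x t (x t - 1) t + 1) = x := by
        rw [Function.update_self, Function.update_idem]
        rw [Nat.sub_add_cancel hxt]
        exact Function.update_eq_self t x
      exact ⟨⟨hdown x hxSF t, Finset.mem_univ t⟩, by rw [hupd]; exact hxSF⟩
    · rintro ⟨y, t⟩ hq
      rw [hB, Finset.mem_filter, Finset.mem_product] at hq
      obtain ⟨⟨hySF, -⟩, hu⟩ := hq
      rw [hA, Finset.mem_filter, Finset.mem_product]
      exact ⟨⟨hu, Finset.mem_univ t⟩, by simp [Function.update_self]⟩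
    · rintro ⟨x, t⟩ hq
      rw [hA, Finset.mem_filter, Finset.mem_product] at hq
      obtain ⟨-, hxt⟩ := hq
      simp only [Prod.mk.injEq]
      refine ⟨?_, trivial⟩
      rw [Function.update_self, Function.update_idem, Nat.sub_add_cancel hxt]
      exact Function.update_eq_self t x
    · rintro ⟨y, t⟩ _
      simp only [Prod.mk.injEq]
      refine ⟨?_, trivial⟩
      rw [Function.update_self, Function.update_idem, Nat.add_sub_cancel]
      exact Function.update_eq_self t y
    · rintro ⟨x, t⟩ hq
      rw [hA, Finset.mem_filter, Finset.mem_product] at hq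
      obtain ⟨-, hxt⟩ := hq
      simp only
      rw [hnd x t hxt]
      rw [show c x * (x t : ℝ) * p ^ (n x - 1) =
        (c x * (x t : ℝ)) * p ^ (n x - 1) by ring, hcd x t hxt]
      ring
  have step4 : ∑ q ∈ B, lam * r q.2 * (c q.1 * p ^ (n q.1)) <
      ∑ q ∈ SF ×ˢ Finset.univ, lam * r q.2 * (c q.1 * p ^ (n q.1)) := by
    refine Finset.sum_lt_sum_of_subset (Finset.filter_subset _ _)
      (i := (y₀, t0)) ?_ ?_ ?_ ?_
    · rw [Finset.mem_product]; exact ⟨hy₀SF, Finset.mem_univ t0⟩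
    · rw [hB, Finset.mem_filter]
      rintro ⟨-, h⟩
      exact hy₀out h
    · have := hcpos y₀
      have := pow_pos hp (n y₀)
      have := hr t0
      positivity
    · rintro ⟨y, t⟩ _ _
      have := hcpos y
      have := pow_pos hp (n y)
      have := (hr t)
      positivity
  have step5 : ∑ q ∈ SF ×ˢ Finset.univ, lam * r q.2 * (c q.1 * p ^ (n q.1)) =
      lam * ∑ x ∈ SF, c x * p ^ (n x) := by
    rw [Finset.sum_product, Finset.mul_sum]
    refine Finset.sum_congr rfl fun x _ => ?_
    have : ∑ t, lam * r t * (c x * p ^ n x) = (∑ t, r t) * (lam * (c x * p ^ n x)) := by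
      rw [Finset.sum_mul]
      exact Finset.sum_congr rfl fun t _ => by ring
    rw [this, hrsum]; ring
  calc ∑ x ∈ SF, c x * ((n x : ℝ) * p ^ (n x - 1))
      = ∑ q ∈ A, c q.1 * (q.1 q.2 : ℝ) * p ^ (n q.1 - 1) := by rw [step1, step2]
    _ = ∑ q ∈ B, lam * r q.2 * (c q.1 * p ^ (n q.1)) := step3
    _ < ∑ q ∈ SF ×ˢ Finset.univ, lam * r q.2 * (c q.1 * p ^ (n q.1)) := step4
    _ = lam * ∑ x ∈ SF, c x * p ^ (n x) := step5



/-- Existence and Uniqueness: If `0 < C < K` and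
`F(1) < (1 − C/K) * exp λ`, then the equation `F(p) = G(p)` has exactly one
solution `p ∈ [0,1]`, and this solution lies in the open interval `(0,1)`.
This `p` is the unique symmetric mixed Nash equilibrium of the protection game. -/
theorem mixed_equilibrium_exists_unique (T : ℕ) (hT : 1 ≤ T)
    (lam : ℝ) (hlam : 0 < lam)
    (r : Fin T → ℝ) (hr : ∀ t, 0 < r t) (hrsum : ∑ t, r t = 1)
    (τ : Fin T → ℝ) (hτ : ∀ t, 0 < τ t)
    (K C : ℝ) (hK : 0 < K) (hC : 0 < C) (hCK : C < K)
    (S : Set (Fin T → ℕ))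
    (hSdef : S = {x : Fin T → ℕ | ∑ t, (x t : ℝ) * τ t / (1 + τ t) < 1})
    (hSfin : S.Finite)
    (F : ℝ → ℝ)
    (hF : ∀ p : ℝ, F p =
      ∑ x ∈ hSfin.toFinset, ∏ t, (lam * r t * p) ^ (x t) / (Nat.factorial (x t) : ℝ))
    (G : ℝ → ℝ)
    (hG : ∀ p : ℝ, G p = (1 - C / K) * Real.exp (lam * p))
    (hcond : F 1 < (1 - C / K) * Real.exp lam) :
    (∃! p : ℝ, p ∈ Set.Icc (0 : ℝ) 1 ∧ F p = G p) ∧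
    (∀ p ∈ Set.Icc (0 : ℝ) 1, F p = G p → p ∈ Set.Ioo (0 : ℝ) 1) := by
  classical
  set a : Fin T → ℝ := fun t => τ t / (1 + τ t) with haa
  have ha : ∀ t, 0 < a t := fun t => div_pos (hτ t) (by linarith [hτ t])
  set SF := hSfin.toFinset with hSF
  have hmemSF : ∀ x, x ∈ SF ↔ ∑ t, (x t : ℝ) * a t < 1 := by
    intro x
    rw [hSF, Set.Finite.mem_toFinset, hSdef]
    simp only [Set.mem_setOf_eq, haa]
    constructor <;> intro h <;>
      [ (rw [show (∑ t, (x t : ℝ) * (τ t / (1 + τ t))) = ∑ t, (x t : ℝ) * τ t / (1 + τ t)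
          from Finset.sum_congr rfl fun t _ => by rw [mul_div_assoc]]; exact h);
        (rw [show (∑ t, (x t : ℝ) * τ t / (1 + τ t)) = ∑ t, (x t : ℝ) * (τ t / (1 + τ t))
          from Finset.sum_congr rfl fun t _ => by rw [mul_div_assoc]]; exact h)]
  set c : (Fin T → ℕ) → ℝ := fun x => ∏ t, (lam * r t) ^ (x t) / (Nat.factorial (x t) : ℝ)
    with hc
  set n : (Fin T → ℕ) → ℕ := fun x => ∑ t, x t with hn
  have hF' : ∀ p, F p = ∑ x ∈ SF, c x * p ^ (n x) := by
    intro p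
    rw [hF]
    refine Finset.sum_congr rfl fun x _ => ?_
    have : ∀ t, (lam * r t * p) ^ (x t) / (Nat.factorial (x t) : ℝ) =
        ((lam * r t) ^ (x t) / (Nat.factorial (x t) : ℝ)) * p ^ (x t) := by
      intro t; rw [mul_pow]; ring
    rw [Finset.prod_congr rfl fun t _ => this t, Finset.prod_mul_distrib,
      Finset.prod_pow_eq_pow_sum]
  set DF : ℝ → ℝ := fun p => ∑ x ∈ SF, c x * ((n x : ℝ) * p ^ (n x - 1)) with hDF
  have hFeq : F = fun p => ∑ x ∈ SF, c x * p ^ (n x) := funext hF'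
  have hFd : ∀ p, HasDerivAt F (DF p) p := by
    intro p
    rw [hFeq]
    exact HasDerivAt.fun_sum fun x _ => (hasDerivAt_pow (n x) p).const_mul (c x)
  set φ : ℝ → ℝ := fun p => F p * Real.exp (-(lam * p)) with hφ
  have hEd : ∀ p : ℝ, HasDerivAt (fun q => Real.exp (-(lam * q)))
      (Real.exp (-(lam * p)) * (-lam)) p := by
    intro p
    have h1 : HasDerivAt (fun q : ℝ => -(lam * q)) (-lam) p := by
      have h := ((hasDerivAt_id p).const_mul lam).neg; simp only [mul_one] at h; exact h
    exact h1.exp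
  have hφd : ∀ p, HasDerivAt φ
      (DF p * Real.exp (-(lam * p)) + F p * (Real.exp (-(lam * p)) * (-lam))) p :=
    fun p => (hFd p).mul (hEd p)
  have hcont : Continuous φ :=
    continuous_iff_continuousAt.mpr fun p => (hφd p).differentiableAt.continuousAt
  have hkey : ∀ p : ℝ, 0 < p → DF p < lam * F p := by
    intro p hp
    rw [hF' p, hDF]
    exact key_ineq T lam hlam r hr hrsum a ha ⟨0, hT⟩ SF hmemSF p hp
  have hFpos : ∀ p : ℝ, 0 < p → 0 < F p := by
    intro p hp
    rw [hF' p]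
    have h0SF : (0 : Fin T → ℕ) ∈ SF := by
      rw [hmemSF]; simp
    refine Finset.sum_pos' (fun x hx => ?_) ⟨0, h0SF, ?_⟩
    · have : 0 < c x := Finset.prod_pos fun t _ =>
        div_pos (pow_pos (mul_pos hlam (hr t)) _) (by positivity)
      positivity
    · have : 0 < c (0 : Fin T → ℕ) := Finset.prod_pos fun t _ =>
        div_pos (pow_pos (mul_pos hlam (hr t)) _) (by positivity)
      positivity
  have hanti : StrictAntiOn φ (Set.Icc (0 : ℝ) 1) := by
    refine strictAntiOn_of_deriv_neg (convex_Icc 0 1) hcont.continuousOn fun p hp => ?_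
    rw [interior_Icc] at hp
    rw [(hφd p).deriv]
    have h1 := hkey p hp.1
    have h2 := Real.exp_pos (-(lam * p))
    nlinarith
  -- value computations
  have hF0 : F 0 = 1 := by
    rw [hF' 0]
    have h0SF : (0 : Fin T → ℕ) ∈ SF := by rw [hmemSF]; simp
    rw [Finset.sum_eq_single_of_mem (0 : Fin T → ℕ) h0SF]
    · have : n (0 : Fin T → ℕ) = 0 := by simp [hn]
      rw [this, pow_zero, mul_one]
      simp [hc]
    · intro x _ hxne
      have hnx : n x ≠ 0 := by
        intro h0
        apply hxne
        funext t
        exact Finset.sum_eq_zero_iff.mp h0 t (Finset.mem_univ t)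
      rw [zero_pow hnx, mul_zero]
  have hφ0 : φ 0 = 1 := by
    rw [hφ]; simp [hF0]
  have hφdiv : ∀ p, φ p = F p / Real.exp (lam * p) := by
    intro p; simp only [hφ]; rw [Real.exp_neg, div_eq_mul_inv]
  have hiff : ∀ p, F p = G p ↔ φ p = 1 - C / K := by
    intro p
    rw [hG p, hφdiv, div_eq_iff (Real.exp_ne_zero _)]
  have hv1 : (1 : ℝ) - C / K < 1 := by
    have : 0 < C / K := div_pos hC hK
    linarith
  have hv0 : (0 : ℝ) < 1 - C / K := by
    have : C / K < 1 := (div_lt_one hK).mpr hCK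
    linarith
  have hφ1 : φ 1 < 1 - C / K := by
    rw [hφdiv, div_lt_iff₀ (Real.exp_pos _)]
    simpa using hcond
  -- existence
  have hexist : ∃ p ∈ Set.Ioo (0 : ℝ) 1, φ p = 1 - C / K := by
    have hsub := intermediate_value_Ioo' (le_of_lt one_pos) hcont.continuousOn
      (a := (0:ℝ)) (b := 1) (f := φ)
    have hmem : (1 - C / K) ∈ Set.Ioo (φ 1) (φ 0) := ⟨hφ1, by rw [hφ0]; exact hv1⟩
    obtain ⟨p, hpIoo, hpφ⟩ := hsub hmem
    exact ⟨p, hpIoo, hpφ⟩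
  obtain ⟨p₀, hp₀Ioo, hp₀φ⟩ := hexist
  have hp₀Icc : p₀ ∈ Set.Icc (0 : ℝ) 1 := Set.Ioo_subset_Icc_self hp₀Ioo
  have huniq : ∀ q ∈ Set.Icc (0 : ℝ) 1, φ q = 1 - C / K → q = p₀ := by
    intro q hq hqφ
    exact hanti.injOn hq hp₀Icc (by rw [hqφ, hp₀φ])
  refine ⟨⟨p₀, ⟨hp₀Icc, (hiff p₀).mpr hp₀φ⟩, fun q ⟨hq1, hq2⟩ =>
    huniq q hq1 ((hiff q).mp hq2)⟩, fun p hp hFG => ?_⟩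
  rw [huniq p hp ((hiff p).mp hFG)]
  exact hp₀Ioo
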